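/- If X is a Corson compact space that has a topological basis of cardinality at most λ, where λ is an infinite cardinal, then the cardinality of X is at most λ^ℵ₀. -/

import Mathlib

open Cardinal

/-- A topological space is Corson compact if it is compact Hausdorff and embeds into some
Tychonoff cube `[0,1]^ι` in such a way that every point has countable support. -/
def IsCorsonCompact (X : Type u) [TopologicalSpace X] : Prop :=
  CompactSpace X ∧ T2Space X ∧
    ∃ (ι : Type u) (e : X → (ι → Set.Icc (0:ℝ) 1)), Topology.IsEmbedding e ∧
      ∀ x : X, {ξ : ι | (e x ξ : ℝ) ≠ 0}.Countable

/-- A Corson compact space with a topological basis of cardinality at most `lam` has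
cardinality at most `lam ^ ℵ₀`. -/
theorem stmt_6 (X : Type u) [TopologicalSpace X] (hX : IsCorsonCompact X)
    (lam : Cardinal.{u}) (hlam : ℵ₀ ≤ lam)
    (hw : ∃ B : Set (Set X), TopologicalSpace.IsTopologicalBasis B ∧ #B ≤ lam) :
    #X ≤ lam ^ ℵ₀ := by
  classical
  obtain ⟨_, _, ι, e, he, hsupp⟩ := hX
  obtain ⟨B, hB, hBcard⟩ := hw
  rcases isEmpty_or_nonempty X with h | h
  · simp [Cardinal.mk_eq_zero X]
  -- some basic cardinal facts
  have hself : lam ≤ lam ^ (ℵ₀ : Cardinal) :=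
    Cardinal.self_le_power lam Cardinal.one_le_aleph0
  have haleph : (ℵ₀ : Cardinal) ≤ lam ^ (ℵ₀ : Cardinal) := hlam.trans hself
  have hcont : (𝔠 : Cardinal.{u}) ≤ lam ^ (ℵ₀ : Cardinal) := by
    rw [← Cardinal.two_power_aleph0]
    exact Cardinal.power_le_power_right ((Cardinal.nat_lt_aleph0 2).le.trans hlam |>.trans' (by norm_num))
  -- a dense set of cardinality ≤ lam
  let pick : Set X → X := fun s => if hs : s.Nonempty then hs.choose else Classical.arbitrary X
  have hpickmem : ∀ s : Set X, s.Nonempty → pick s ∈ s := by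
    intro s hs
    simp only [pick, dif_pos hs]
    exact hs.choose_spec
  set D : Set X := pick '' B with hDdef
  have hDdense : Dense D := by
    rw [dense_iff_inter_open]
    intro U hU hUne
    obtain ⟨x, hx⟩ := hUne
    obtain ⟨b, hbB, hxb, hbU⟩ := hB.exists_subset_of_mem_open hx hU
    exact ⟨pick b, hbU (hpickmem b ⟨x, hxb⟩), ⟨b, hbB, rfl⟩⟩
  -- the union of supports over the dense set
  set J : Set ι := ⋃ d ∈ D, {ξ : ι | (e d ξ : ℝ) ≠ 0} with hJdef
  have hJ : ∀ (x : X) (ξ : ι), (e x ξ : ℝ) ≠ 0 → ξ ∈ J := by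
    intro x ξ hx
    by_contra hξ
    have hc : Continuous fun z : X => (e z ξ : ℝ) :=
      continuous_subtype_val.comp ((continuous_apply ξ).comp he.continuous)
    have hU : IsOpen {z : X | (e z ξ : ℝ) ≠ 0} := isOpen_ne.preimage hc
    obtain ⟨d, hdU, hdD⟩ := hDdense.inter_open_nonempty _ hU ⟨x, hx⟩
    exact hξ (Set.mem_biUnion hdD hdU)
  have hJcard : #J ≤ lam := by
    calc #J ≤ #D * ⨆ d : D, #{ξ : ι | (e (d : X) ξ : ℝ) ≠ 0} :=
          Cardinal.mk_biUnion_le _ _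
      _ ≤ lam * ℵ₀ := by
          refine mul_le_mul' (le_trans Cardinal.mk_image_le hBcard) ?_
          exact ciSup_le' fun d =>
            Cardinal.mk_le_aleph0_iff.2 (Set.countable_coe_iff.2 (hsupp d))
      _ ≤ lam * lam := mul_le_mul' le_rfl hlam
      _ = lam := Cardinal.mul_eq_self hlam
  -- the countable support of each point, as a subset of J
  set S : X → Set J := fun x => {ξ : J | (e x (ξ : ι) : ℝ) ≠ 0} with hSdef
  have hScount : ∀ x, (insert (none : Option J) (Option.some '' S x)).Countable := by
    intro x
    refine (Set.Countable.image ?_ _).insert _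
    exact (hsupp x).preimage Subtype.coe_injective
  have hchoice : ∀ x : X, ∃ f : ℕ → Option J,
      insert (none : Option J) (Option.some '' S x) = Set.range f :=
    fun x => (hScount x).exists_eq_range ⟨none, Set.mem_insert _ _⟩
  choose F hF using hchoice
  -- the injection
  set g : X → ℕ → Option (J × ℝ) :=
    fun x n => (F x n).map fun ξ => (ξ, (e x (ξ : ι) : ℝ)) with hgdef
  have key : ∀ x y : X, g x = g y → ∀ ξ : ι, (e x ξ : ℝ) ≠ 0 → (e x ξ : ℝ) = (e y ξ : ℝ) := by
    intro x y hxy ξ hxξ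
    have hξJ : ξ ∈ J := hJ x ξ hxξ
    have hmem : (some ⟨ξ, hξJ⟩ : Option J) ∈ insert (none : Option J) (Option.some '' S x) :=
      Set.mem_insert_of_mem _ ⟨⟨ξ, hξJ⟩, hxξ, rfl⟩
    rw [hF x] at hmem
    obtain ⟨n, hn⟩ := hmem
    have h1 : g x n = some (⟨ξ, hξJ⟩, (e x ξ : ℝ)) := by
      simp only [hgdef, hn, Option.map_some]
    have h2 : g y n = some (⟨ξ, hξJ⟩, (e x ξ : ℝ)) := by rw [← hxy]; exact h1
    simp only [hgdef, Option.map_eq_some_iff] at h2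
    obtain ⟨a, _, ha2⟩ := h2
    obtain ⟨ha, hv⟩ := Prod.mk.injEq _ _ _ _ ▸ ha2
    rw [← hv, ha]
  have hginj : Function.Injective g := by
    intro x y hxy
    apply he.injective
    funext ξ
    ext
    by_cases hx0 : (e x ξ : ℝ) = 0
    · by_cases hy0 : (e y ξ : ℝ) = 0
      · rw [hx0, hy0]
      · exact (key y x hxy.symm ξ hy0).symm
    · exact key x y hxy ξ hx0
  -- cardinal arithmetic
  have hOpt : #(Option (J × ℝ)) ≤ lam ^ (ℵ₀ : Cardinal) := by
    rw [Cardinal.mk_option]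
    have hJR : #(J × ℝ) ≤ lam ^ (ℵ₀ : Cardinal) := by
      rw [Cardinal.mk_prod]
      have h1 : Cardinal.lift.{0} #J ≤ lam ^ (ℵ₀ : Cardinal) := by
        rw [Cardinal.lift_id']
        exact hJcard.trans hself
      have h2 : Cardinal.lift.{u} #ℝ ≤ lam ^ (ℵ₀ : Cardinal) := by
        rw [Cardinal.mk_real, Cardinal.lift_continuum]
        exact hcont
      calc Cardinal.lift.{0} #J * Cardinal.lift.{u} #ℝ
          ≤ lam ^ (ℵ₀ : Cardinal) * lam ^ (ℵ₀ : Cardinal) := mul_le_mul' h1 h2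
        _ = lam ^ (ℵ₀ : Cardinal) := Cardinal.mul_eq_self haleph
    calc #(J × ℝ) + 1 ≤ lam ^ (ℵ₀ : Cardinal) + 1 := add_le_add_left hJR 1
      _ = lam ^ (ℵ₀ : Cardinal) := Cardinal.add_one_eq haleph
  calc #X ≤ #(ℕ → Option (J × ℝ)) := Cardinal.mk_le_of_injective hginj
    _ = #(Option (J × ℝ)) ^ (ℵ₀ : Cardinal) := by
        rw [Cardinal.mk_arrow, Cardinal.mk_nat, Cardinal.lift_aleph0, Cardinal.lift_id']
    _ ≤ (lam ^ (ℵ₀ : Cardinal)) ^ (ℵ₀ : Cardinal) :=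
        Cardinal.power_le_power_right hOpt
    _ = lam ^ (ℵ₀ : Cardinal) := by
        rw [← Cardinal.power_mul, Cardinal.aleph0_mul_aleph0]
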